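/- (Satisfaction of AB̄N formulas is history-independent.) Let M be the model of an interpreted system with regular labelling and φ an EHS⁺_{AB̄N} formula (an EHS⁺ formula whose modalities are all among K_i, C_Γ, ⟨A⟩, ⟨B̄⟩, ⟨N⟩). For all intervals I, I' of M with g(I) = g(I'): M,I ⊨ φ if and only if M,I' ⊨ φ. -/

import Mathlib

/-- The Halpern-Shoham interval modalities. -/
inductive HSMod : Type where
  | A | Abar | B | Bbar | D | Dbar | E | Ebar | L | Lbar | N | Nbar | O | Obar
  deriving DecidableEq

/-- Formulas of the logic EHS⁺ over agents `0,…,m` and propositional variables `V`. -/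
inductive EHSFormula (m : ℕ) (V : Type) : Type where
  | pt : EHSFormula m V
  | prop : V → EHSFormula m V
  | neg : EHSFormula m V → EHSFormula m V
  | conj : EHSFormula m V → EHSFormula m V → EHSFormula m V
  | know : Fin (m + 1) → EHSFormula m V → EHSFormula m V
  | common : Finset (Fin (m + 1)) → EHSFormula m V → EHSFormula m V
  | dia : HSMod → EHSFormula m V → EHSFormula m V
  deriving DecidableEq

/-- An interpreted system with regular labelling over agents `0,…,m` (agent `0` is the
environment) and variables `Var`. -/
structure ISRL (m : ℕ) (Var : Type) where
  L : Fin (m + 1) → Type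
  finL : ∀ i, Fintype (L i)
  l0 : ∀ i, L i
  ACT : Fin (m + 1) → Type
  finACT : ∀ i, Fintype (ACT i)
  P : ∀ i, L i → Set (ACT i)
  T : ∀ i, L i → (∀ j, ACT j) → L i → Prop
  lab : Var → RegularExpression (∀ i, L i)

attribute [instance] ISRL.finL ISRL.finACT

namespace ISRL

variable {m : ℕ} {Var : Type}

/-- Global configurations. -/
abbrev G (IS : ISRL m Var) : Type := ∀ i, IS.L i

instance (IS : ISRL m Var) : Fintype IS.G := Pi.instFintype

/-- The initial global configuration. -/
def g0 (IS : ISRL m Var) : IS.G := IS.l0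

/-- The global transition relation `t^G`. -/
def tG (IS : ISRL m Var) (g g' : IS.G) : Prop :=
  ∃ a : ∀ j, IS.ACT j, ∀ i, a i ∈ IS.P i (g i) ∧ IS.T i (g i) a (g' i)

/-- A partial state: a nonempty `t^G`-chain of configurations. -/
def IsPState (IS : ISRL m Var) (w : List IS.G) : Prop :=
  w ≠ [] ∧ w.Chain' IS.tG

/-- A global state of the model: a partial state starting at the initial configuration. -/
def IsState (IS : ISRL m Var) (w : List IS.G) : Prop :=
  IS.IsPState w ∧ w.head? = some IS.g0

/-- `g(s)`: the actual configuration of a (partial) state, i.e. its last configuration. -/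
def gOf (IS : ISRL m Var) (w : List IS.G) : IS.G := w.getLastD IS.g0

/-- The global transition relation `t` of the model: extension by exactly one configuration. -/
def step (IS : ISRL m Var) (w w' : List IS.G) : Prop := ∃ g : IS.G, w' = w ++ [g]

/-- Epistemic indistinguishability of states for agent `i`. -/
def simS (IS : ISRL m Var) (i : Fin (m + 1)) (w w' : List IS.G) : Prop :=
  IS.gOf w i = IS.gOf w' i

/-- An interval of the model: a nonempty `t`-path of global states. -/
def IsInterval (IS : ISRL m Var) (l : List (List IS.G)) : Prop :=
  l ≠ [] ∧ (∀ w ∈ l, IS.IsState w) ∧ l.Chain' IS.step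

/-- Intervals of the model of `IS`. -/
structure Interval (IS : ISRL m Var) : Type where
  seq : List (List IS.G)
  isInterval : IS.IsInterval seq

namespace Interval

variable {IS : ISRL m Var}

/-- `first(I)`. -/
def first (I : Interval IS) : List IS.G := I.seq.headD []

/-- `last(I)`. -/
def last (I : Interval IS) : List IS.G := I.seq.getLastD []

/-- `I` is a point interval. -/
def isPt (I : Interval IS) : Prop := I.seq.length = 1

/-- `g(I)`, the word of configurations read along `I`. -/
def gword (I : Interval IS) : List IS.G := I.seq.map IS.gOf

end Interval

section rels

variable {IS : ISRL m Var}

def relA (I I' : Interval IS) : Prop := I'.first = I.last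
def relB (I I' : Interval IS) : Prop :=
  ∃ J : List (List IS.G), J ≠ [] ∧ I.seq = I'.seq ++ J
def relD (I I' : Interval IS) : Prop :=
  ∃ J K : List (List IS.G), J ≠ [] ∧ K ≠ [] ∧ I.seq = J ++ I'.seq ++ K
def relE (I I' : Interval IS) : Prop :=
  ∃ J : List (List IS.G), J ≠ [] ∧ I.seq = J ++ I'.seq
def relL (I I' : Interval IS) : Prop := Relation.TransGen IS.step I.last I'.first
def relN (I I' : Interval IS) : Prop := IS.step I.last I'.first
def relO (I I' : Interval IS) : Prop :=
  ∃ J K : List (List IS.G), J ≠ [] ∧ K ≠ [] ∧ I.seq ++ J = K ++ I'.seq ∧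
    IS.IsInterval (I.seq ++ J)

end rels

/-- The Allen relations on intervals of the model of `IS`. -/
def hsRel (IS : ISRL m Var) : HSMod → Interval IS → Interval IS → Prop
  | .A => fun I I' => relA I I'
  | .Abar => fun I I' => relA I' I
  | .B => fun I I' => relB I I'
  | .Bbar => fun I I' => relB I' I
  | .D => fun I I' => relD I I'
  | .Dbar => fun I I' => relD I' I
  | .E => fun I I' => relE I I'
  | .Ebar => fun I I' => relE I' I
  | .L => fun I I' => relL I I'
  | .Lbar => fun I I' => relL I' I
  | .N => fun I I' => relN I I'
  | .Nbar => fun I I' => relN I' I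
  | .O => fun I I' => relO I I'
  | .Obar => fun I I' => relO I' I

/-- Epistemic indistinguishability of intervals for agent `i`. -/
def simI (IS : ISRL m Var) (i : Fin (m + 1)) (I I' : Interval IS) : Prop :=
  List.Forall₂ (IS.simS i) I.seq I'.seq

/-- `∼_Γ`: the transitive closure of the union of the `∼_i`, `i ∈ Γ`. -/
def simC (IS : ISRL m Var) (Γ : Finset (Fin (m + 1))) : Interval IS → Interval IS → Prop :=
  Relation.TransGen (fun I I' => ∃ i ∈ Γ, IS.simI i I I')

/-- Satisfaction of EHS⁺ formulas at an interval, with respect to a labelling `lab`. -/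
def Sat (IS : ISRL m Var) {W : Type} (lab : W → RegularExpression IS.G) :
    EHSFormula m W → Interval IS → Prop
  | .pt, I => I.isPt
  | .prop p, I => I.gword ∈ (lab p).matches'
  | .neg φ, I => ¬ Sat IS lab φ I
  | .conj φ ψ, I => Sat IS lab φ I ∧ Sat IS lab ψ I
  | .know i φ, I => ∀ I', IS.simI i I' I → Sat IS lab φ I'
  | .common Γ φ, I => ∀ I', IS.simC Γ I' I → Sat IS lab φ I'
  | .dia X φ, I => ∃ I', IS.hsRel X I I' ∧ Sat IS lab φ I'

end ISRL

namespace ISRL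

variable {m : ℕ} {Var : Type} (IS : ISRL m Var)

lemma gOf_concat (w : List IS.G) (g : IS.G) : IS.gOf (w ++ [g]) = g := by
  simp [gOf, List.getLastD_concat]

lemma getLast?_eq_gOf {w : List IS.G} (hw : w ≠ []) : w.getLast? = some (IS.gOf w) := by
  rw [gOf, List.getLastD_eq_getLast?]
  cases h : w.getLast? with
  | none => exact absurd (List.getLast?_eq_none_iff.mp h) hw
  | some a => rfl

lemma head?_append_left {α : Type*} {l : List α} (l' : List α) (hl : l ≠ []) :
    (l ++ l').head? = l.head? := by cases l <;> simp_all

lemma headD_append_left {α : Type*} {l : List α} (l' : List α) (d : α) (hl : l ≠ []) :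
    (l ++ l').headD d = l.headD d := by cases l <;> simp_all

lemma getLastD_map {α β : Type*} (f : α → β) {l : List α} (hl : l ≠ []) (d : β) (d' : α) :
    (l.map f).getLastD d = f (l.getLastD d') := by
  rcases List.eq_nil_or_concat l with rfl | ⟨L, b, rfl⟩
  · exact absurd rfl hl
  · simp [List.getLastD_concat]

lemma headD_mem {α : Type*} {l : List α} (hl : l ≠ []) (d : α) : l.headD d ∈ l := by
  cases l <;> simp_all

lemma getLastD_mem {α : Type*} {l : List α} (hl : l ≠ []) (d : α) : l.getLastD d ∈ l := by
  rcases List.eq_nil_or_concat l with rfl | ⟨L, b, rfl⟩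
  · exact absurd rfl hl
  · simp [List.getLastD_concat]

lemma chain'_concat_tG {w : List IS.G} {g : IS.G} (hw : w ≠ [])
    (hc : List.Chain' IS.tG (w ++ [g])) : IS.tG (IS.gOf w) g := by
  obtain ⟨-, -, h⟩ := List.isChain_append.mp hc
  exact h _ (getLast?_eq_gOf IS hw) g rfl

lemma state_concat {w : List IS.G} {g : IS.G} (hw : IS.IsState w)
    (htg : IS.tG (IS.gOf w) g) : IS.IsState (w ++ [g]) := by
  obtain ⟨⟨hne, hc⟩, hh⟩ := hw
  refine ⟨⟨by simp, List.isChain_append.mpr ⟨hc, by simp, ?_⟩⟩, ?_⟩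
  · intro x hx y hy
    rw [getLast?_eq_gOf IS hne] at hx
    cases hx; cases hy; exact htg
  · rw [head?_append_left _ hne]; exact hh

/-- The canonical interval sequence determined by a first state and a word of
subsequent configurations. -/
def mkSeq : List IS.G → List IS.G → List (List IS.G)
  | w, [] => [w]
  | w, g :: gs => w :: mkSeq (w ++ [g]) gs

lemma mkSeq_ne_nil (w : List IS.G) (gs : List IS.G) : IS.mkSeq w gs ≠ [] := by
  cases gs <;> simp [mkSeq]

lemma head?_mkSeq (w : List IS.G) (gs : List IS.G) : (IS.mkSeq w gs).head? = some w := by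
  cases gs <;> simp [mkSeq]

lemma headD_mkSeq (w : List IS.G) (gs : List IS.G) : (IS.mkSeq w gs).headD [] = w := by
  cases gs <;> simp [mkSeq]

lemma map_gOf_mkSeq (gs : List IS.G) : ∀ w, (IS.mkSeq w gs).map IS.gOf = IS.gOf w :: gs := by
  induction gs with
  | nil => intro w; simp [mkSeq]
  | cons g gs ih => intro w; simp [mkSeq, ih, gOf_concat]

lemma chain'_step_mkSeq (gs : List IS.G) : ∀ w, List.Chain' IS.step (IS.mkSeq w gs) := by
  induction gs with
  | nil => intro w; simp [mkSeq, List.Chain', List.isChain_singleton]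
  | cons g gs ih =>
    intro w
    rw [mkSeq, List.Chain', List.isChain_cons]
    refine ⟨fun b hb => ?_, ih _⟩
    rw [head?_mkSeq] at hb
    cases hb
    exact ⟨g, rfl⟩

lemma isState_mkSeq (gs : List IS.G) : ∀ w, IS.IsState w →
    List.Chain' IS.tG (IS.gOf w :: gs) → ∀ u ∈ IS.mkSeq w gs, IS.IsState u := by
  induction gs with
  | nil => intro w hw _ u hu; rw [mkSeq] at hu; simp at hu; subst hu; exact hw
  | cons g gs ih =>
    intro w hw hc u hu
    rw [mkSeq] at hu
    rcases List.mem_cons.mp hu with rfl | hu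
    · exact hw
    · obtain ⟨htg, hc'⟩ := List.isChain_cons_cons.mp hc
      refine ih _ (state_concat IS hw htg) ?_ u hu
      rwa [gOf_concat]

lemma isInterval_mkSeq {w : List IS.G} {gs : List IS.G} (hw : IS.IsState w)
    (hc : List.Chain' IS.tG (IS.gOf w :: gs)) : IS.IsInterval (IS.mkSeq w gs) :=
  ⟨IS.mkSeq_ne_nil w gs, IS.isState_mkSeq gs w hw hc, IS.chain'_step_mkSeq gs w⟩

/-- The canonical interval determined by a first state and a word of configurations. -/
def mkInt (w : List IS.G) (gs : List IS.G) (hw : IS.IsState w)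
    (hc : List.Chain' IS.tG (IS.gOf w :: gs)) : Interval IS :=
  ⟨IS.mkSeq w gs, IS.isInterval_mkSeq hw hc⟩

lemma mkInt_first (w gs hw hc) : (IS.mkInt w gs hw hc).first = w :=
  IS.headD_mkSeq w gs

lemma mkInt_gword (w gs hw hc) : (IS.mkInt w gs hw hc).gword = IS.gOf w :: gs :=
  IS.map_gOf_mkSeq gs w

lemma mkSeq_append (gs1 : List IS.G) (g : IS.G) (gs2 : List IS.G) :
    ∀ w, IS.mkSeq w (gs1 ++ g :: gs2) = IS.mkSeq w gs1 ++ IS.mkSeq (w ++ gs1 ++ [g]) gs2 := by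
  induction gs1 with
  | nil => intro w; simp [mkSeq]
  | cons g1 gs1 ih => intro w; simp [mkSeq, ih, List.append_assoc]

lemma eq_mkSeq (l : List (List IS.G)) (hne : l ≠ []) (hc : List.Chain' IS.step l) :
    l = IS.mkSeq (l.headD []) ((l.map IS.gOf).tail) := by
  induction l with
  | nil => exact absurd rfl hne
  | cons w l ih =>
    cases l with
    | nil => simp [mkSeq]
    | cons v l' =>
      obtain ⟨hstep, hc'⟩ := List.isChain_cons_cons.mp hc
      obtain ⟨g, rfl⟩ := hstep
      have h2 := ih (by simp) hc'
      simp only [List.map_cons, List.tail_cons, List.headD_cons] at h2 ⊢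
      rw [mkSeq, gOf_concat]
      exact congrArg (w :: ·) h2

lemma chain'_tG_of_states (l : List (List IS.G)) (hs : ∀ u ∈ l, IS.IsState u)
    (hc : List.Chain' IS.step l) : List.Chain' IS.tG (l.map IS.gOf) := by
  induction l with
  | nil => simp [List.Chain', List.isChain_nil]
  | cons w l ih =>
    cases l with
    | nil => simp [List.Chain', List.isChain_singleton]
    | cons v l' =>
      obtain ⟨hstep, hc'⟩ := List.isChain_cons_cons.mp hc
      obtain ⟨g, rfl⟩ := hstep
      have hw : IS.IsState w := hs w (by simp)
      have hv : IS.IsState (w ++ [g]) := hs _ (by simp)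
      simp only [List.map_cons]
      rw [List.Chain', List.isChain_cons_cons]
      constructor
      · rw [gOf_concat]; exact IS.chain'_concat_tG hw.1.1 hv.1.2
      · have := ih (fun u hu => hs u (List.mem_cons_of_mem _ hu)) hc'
        simpa [List.Chain'] using this

variable {IS}

lemma Interval.seq_ne_nil (I : Interval IS) : I.seq ≠ [] := I.isInterval.1

lemma Interval.first_isState (I : Interval IS) : IS.IsState I.first :=
  I.isInterval.2.1 _ (headD_mem I.seq_ne_nil [])

lemma Interval.last_isState (I : Interval IS) : IS.IsState I.last :=
  I.isInterval.2.1 _ (getLastD_mem I.seq_ne_nil [])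

lemma Interval.seq_eq (I : Interval IS) : I.seq = IS.mkSeq I.first I.gword.tail :=
  IS.eq_mkSeq I.seq I.seq_ne_nil I.isInterval.2.2

lemma Interval.gword_eq (I : Interval IS) : I.gword = IS.gOf I.first :: I.gword.tail := by
  conv_lhs => rw [Interval.gword, I.seq_eq, IS.map_gOf_mkSeq]

lemma Interval.chain'_gword (I : Interval IS) : List.Chain' IS.tG I.gword :=
  IS.chain'_tG_of_states I.seq I.isInterval.2.1 I.isInterval.2.2

lemma Interval.gword_getLastD (I : Interval IS) : I.gword.getLastD IS.g0 = IS.gOf I.last := by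
  rw [Interval.gword, getLastD_map _ I.seq_ne_nil _ []]; rfl

section transfer

variable {I I' : Interval IS}

lemma gOf_last_congr (h : I.gword = I'.gword) : IS.gOf I.last = IS.gOf I'.last := by
  rw [← I.gword_getLastD, ← I'.gword_getLastD, h]

lemma gOf_first_congr (h : I.gword = I'.gword) : IS.gOf I.first = IS.gOf I'.first := by
  have hh : I.gword.headD IS.g0 = I'.gword.headD IS.g0 := by rw [h]
  rwa [I.gword_eq, I'.gword_eq, List.headD_cons, List.headD_cons] at hh

lemma transferA (h : I.gword = I'.gword) (J : Interval IS) (hJ : relA I J) :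
    ∃ J' : Interval IS, relA I' J' ∧ J'.gword = J.gword := by
  have hg : IS.gOf I'.last = IS.gOf J.first := by
    rw [← gOf_last_congr h, ← hJ]
  have hc : List.Chain' IS.tG (IS.gOf I'.last :: J.gword.tail) := by
    rw [hg, ← J.gword_eq]; exact J.chain'_gword
  refine ⟨IS.mkInt I'.last J.gword.tail I'.last_isState hc, ?_, ?_⟩
  · exact IS.mkInt_first _ _ _ _
  · rw [IS.mkInt_gword, hg, ← J.gword_eq]

lemma transferN (h : I.gword = I'.gword) (J : Interval IS) (hJ : IS.step I.last J.first) :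
    ∃ J' : Interval IS, IS.step I'.last J'.first ∧ J'.gword = J.gword := by
  obtain ⟨g, hg⟩ := hJ
  have hJs : IS.IsState (I.last ++ [g]) := hg ▸ J.first_isState
  have htg : IS.tG (IS.gOf I.last) g := IS.chain'_concat_tG I.last_isState.1.1 hJs.1.2
  have htg' : IS.tG (IS.gOf I'.last) g := gOf_last_congr h ▸ htg
  have hw' : IS.IsState (I'.last ++ [g]) := IS.state_concat I'.last_isState htg'
  have hgof : IS.gOf (I'.last ++ [g]) = IS.gOf J.first := by
    rw [IS.gOf_concat, hg, IS.gOf_concat]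
  have hc : List.Chain' IS.tG (IS.gOf (I'.last ++ [g]) :: J.gword.tail) := by
    rw [hgof, ← J.gword_eq]; exact J.chain'_gword
  refine ⟨IS.mkInt _ J.gword.tail hw' hc, ⟨g, ?_⟩, ?_⟩
  · rw [IS.mkInt_first]
  · rw [IS.mkInt_gword, hgof, ← J.gword_eq]

lemma transferBbar (h : I.gword = I'.gword) (J : Interval IS)
    (hJ : ∃ K, K ≠ [] ∧ J.seq = I.seq ++ K) :
    ∃ J' : Interval IS, (∃ K', K' ≠ [] ∧ J'.seq = I'.seq ++ K') ∧ J'.gword = J.gword := by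
  obtain ⟨K, hK, hseq⟩ := hJ
  have hgw : J.gword = I.gword ++ K.map IS.gOf := by
    rw [Interval.gword, hseq, List.map_append]; rfl
  have hgf : IS.gOf J.first = IS.gOf I'.first := by
    rw [← gOf_first_congr h]
    unfold Interval.first
    rw [hseq, headD_append_left _ _ I.seq_ne_nil]
  have hc : List.Chain' IS.tG (IS.gOf I'.first :: J.gword.tail) := by
    rw [← hgf, ← J.gword_eq]; exact J.chain'_gword
  refine ⟨IS.mkInt I'.first J.gword.tail I'.first_isState hc, ?_, ?_⟩
  · -- J'.seq = I'.seq ++ K'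
    have htail : J.gword.tail = I.gword.tail ++ K.map IS.gOf := by
      rw [hgw]
      conv_lhs => rw [I.gword_eq]
      simp
    cases K with
    | nil => exact absurd rfl hK
    | cons k K' =>
      refine ⟨IS.mkSeq (I'.first ++ I'.gword.tail ++ [IS.gOf k]) (K'.map IS.gOf),
        IS.mkSeq_ne_nil _ _, ?_⟩
      show IS.mkSeq I'.first J.gword.tail = _
      rw [htail, h, List.map_cons, IS.mkSeq_append, ← I'.seq_eq]
  · rw [IS.mkInt_gword, ← hgf, ← J.gword_eq]

end transfer

section sim

variable {I I' : Interval IS}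

lemma simI_congr (i : Fin (m + 1)) (h : I.gword = I'.gword) (J : Interval IS) :
    IS.simI i J I ↔ IS.simI i J I' := by
  have key : ∀ K : Interval IS, IS.simI i J K ↔
      List.Forall₂ (fun u g => IS.gOf u i = g i) J.seq K.gword := by
    intro K
    rw [simI, Interval.gword, List.forall₂_map_right_iff]
    rfl
  rw [key, key, h]

lemma simC_congr (Γ : Finset (Fin (m + 1))) (h : I.gword = I'.gword) (J : Interval IS) :
    IS.simC Γ J I ↔ IS.simC Γ J I' := by
  have half : ∀ {A B : Interval IS}, A.gword = B.gword → ∀ J : Interval IS,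
      IS.simC Γ J A → IS.simC Γ J B := by
    intro A B hAB J hJ
    cases hJ with
    | single hr =>
      obtain ⟨i, hi, hs⟩ := hr
      exact .single ⟨i, hi, (simI_congr i hAB _).mp hs⟩
    | tail h1 h2 =>
      obtain ⟨i, hi, hs⟩ := h2
      exact .tail h1 ⟨i, hi, (simI_congr i hAB _).mp hs⟩
  exact ⟨half h J, half h.symm J⟩

end sim

end ISRL

/-- The `AB̄N` fragment of EHS⁺: all modalities are among `K_i`, `C_Γ`, `⟨A⟩`, `⟨B̄⟩`, `⟨N⟩`. -/
def IsABN {m : ℕ} {V : Type} : EHSFormula m V → Prop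
  | .pt => True
  | .prop _ => True
  | .neg φ => IsABN φ
  | .conj φ ψ => IsABN φ ∧ IsABN ψ
  | .know _ φ => IsABN φ
  | .common _ φ => IsABN φ
  | .dia X φ => (X = HSMod.A ∨ X = HSMod.Bbar ∨ X = HSMod.N) ∧ IsABN φ

open ISRL in
lemma sat_congr_aux {m : ℕ} {Var : Type} (IS : ISRL m Var) (φ : EHSFormula m Var) :
    IsABN φ → ∀ I I' : ISRL.Interval IS, I.gword = I'.gword →
      (Sat IS IS.lab φ I ↔ Sat IS IS.lab φ I') := by
  induction φ with
  | pt =>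
    intro _ I I' h
    have hl : I.seq.length = I'.seq.length := by
      have := congrArg List.length h
      simpa [Interval.gword] using this
    simp [Sat, Interval.isPt, hl]
  | prop p =>
    intro _ I I' h
    simp only [Sat]
    rw [h]
  | neg φ ih =>
    intro hφ I I' h
    simp only [Sat]
    rw [ih hφ I I' h]
  | conj φ ψ ihφ ihψ =>
    intro hφ I I' h
    simp only [Sat]
    rw [ihφ hφ.1 I I' h, ihψ hφ.2 I I' h]
  | know i ψ ih =>
    intro hφ I I' h
    simp only [Sat]
    constructor
    · intro H J hJ; exact H J ((simI_congr i h J).mpr hJ)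
    · intro H J hJ; exact H J ((simI_congr i h J).mp hJ)
  | common Γ ψ ih =>
    intro hφ I I' h
    simp only [Sat]
    constructor
    · intro H J hJ; exact H J ((simC_congr Γ h J).mpr hJ)
    · intro H J hJ; exact H J ((simC_congr Γ h J).mp hJ)
  | dia X ψ ih =>
    intro hφ I I' h
    obtain ⟨hX, hψ⟩ := hφ
    have key : ∀ A B : ISRL.Interval IS, A.gword = B.gword →
        (∃ J, IS.hsRel X A J ∧ Sat IS IS.lab ψ J) →
        ∃ J, IS.hsRel X B J ∧ Sat IS IS.lab ψ J := by
      intro A B hAB ⟨J, hrel, hsat⟩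
      rcases hX with rfl | rfl | rfl
      · obtain ⟨J', hrel', hgw⟩ := ISRL.transferA hAB J hrel
        exact ⟨J', hrel', (ih hψ J' J hgw).mpr hsat⟩
      · obtain ⟨J', hrel', hgw⟩ := ISRL.transferBbar hAB J hrel
        exact ⟨J', hrel', (ih hψ J' J hgw).mpr hsat⟩
      · obtain ⟨J', hrel', hgw⟩ := ISRL.transferN hAB J hrel
        exact ⟨J', hrel', (ih hψ J' J hgw).mpr hsat⟩
    exact ⟨key I I' h, key I' I h.symm⟩
open ISRL in
/-- satisfaction of EHS⁺_{AB̄N} formulas is history-independent.  For all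
intervals `I, I'` of the model with `g(I) = g(I')`: `M,I ⊨ φ` iff `M,I' ⊨ φ`. -/
theorem stmt13 {m : ℕ} {Var : Type} (IS : ISRL m Var)
    (φ : EHSFormula m Var) (hφ : IsABN φ)
    (I I' : ISRL.Interval IS) (h : I.gword = I'.gword) :
    Sat IS IS.lab φ I ↔ Sat IS IS.lab φ I' := by
  exact sat_congr_aux IS φ hφ I I' h
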